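/- For every integer x ≥ 17, there are at least three primes p with x/2 < p ≤ x. -/

import Mathlib

open Real

namespace Ramanujan17

/-- Variant of `Bertrand.real_main_inequality` with two extra factors of `2 * x`. -/
theorem real_main_inequality3 {x : ℝ} (x_large : (2048 : ℝ) ≤ x) :
    x * (2 * x) ^ (√(2 * x) + 2) * 4 ^ (2 * x / 3) ≤ 4 ^ x := by
  let f : ℝ → ℝ := fun x => log x + (√(2 * x) + 2) * log (2 * x) - Real.log 4 / 3 * x
  have hf' : ∀ x, 0 < x → 0 < x * (2 * x) ^ (√(2 * x) + 2) / 4 ^ (x / 3) := fun x h =>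
    div_pos (mul_pos h (rpow_pos_of_pos (mul_pos two_pos h) _)) (rpow_pos_of_pos four_pos _)
  have hf : ∀ x, 0 < x → f x = log (x * (2 * x) ^ (√(2 * x) + 2) / 4 ^ (x / 3)) := by
    intro x h5
    have h6 := mul_pos (zero_lt_two' ℝ) h5
    have h7 := rpow_pos_of_pos h6 (√(2 * x) + 2)
    rw [log_div (mul_pos h5 h7).ne' (rpow_pos_of_pos four_pos _).ne', log_mul h5.ne' h7.ne',
      log_rpow h6, log_rpow zero_lt_four, ← mul_div_right_comm, ← mul_div, mul_comm x]
  have h5 : 0 < x := lt_of_lt_of_le (by norm_num1) x_large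
  rw [← div_le_one (rpow_pos_of_pos four_pos x), ← div_div_eq_mul_div, ← rpow_sub four_pos, ←
    mul_div 2 x, mul_div_left_comm, ← mul_one_sub, (by norm_num1 : (1 : ℝ) - 2 / 3 = 1 / 3),
    mul_one_div, ← log_nonpos_iff (hf' x h5).le, ← hf x h5]
  have h : ConcaveOn ℝ (Set.Ioi 0.5) f := by
    have hlog2x : ConcaveOn ℝ (Set.Ioi (0.5 : ℝ)) fun x : ℝ => Real.log (2 * x) := by
      have h1 := strictConcaveOn_log_Ioi.concaveOn.comp_linearMap ((2 : ℝ) • LinearMap.id)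
      have hsub : Set.Ioi (0.5 : ℝ) ⊆ ⇑((2 : ℝ) • LinearMap.id (R := ℝ) (M := ℝ)) ⁻¹' Set.Ioi 0 := by
        intro y hy
        simp only [Set.mem_Ioi, Set.mem_preimage, LinearMap.smul_apply, LinearMap.id_coe, id_eq,
          smul_eq_mul] at hy ⊢
        linarith
      exact (h1.subset hsub (convex_Ioi 0.5))
    have heq : f = fun x : ℝ =>
        (Real.log x + √(2 * x) * Real.log (2 * x) + 2 * Real.log (2 * x)) -
          Real.log 4 / 3 * x := by
      funext y; simp only [f]; ring
    rw [heq]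
    apply ConcaveOn.sub
    · apply ConcaveOn.add
      · apply ConcaveOn.add
        · exact strictConcaveOn_log_Ioi.concaveOn.subset
            (Set.Ioi_subset_Ioi (by norm_num)) (convex_Ioi 0.5)
        · convert ((strictConcaveOn_sqrt_mul_log_Ioi.concaveOn.comp_linearMap
            ((2 : ℝ) • LinearMap.id))) using 1
          case e'_7 => rfl
          case e'_9 => rfl
          case e'_12 => rfl
          ext x
          simp only [Set.mem_Ioi, Set.mem_preimage, LinearMap.smul_apply,
            LinearMap.id_coe, id_eq, smul_eq_mul]
          rw [← mul_lt_mul_iff_right₀ (two_pos)]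
          norm_num1
          rfl
      · exact hlog2x.smul (by norm_num : (0:ℝ) ≤ 2)
    apply ConvexOn.smul
    · refine div_nonneg (Real.log_nonneg (by norm_num1)) (by norm_num1)
    · exact convexOn_id (convex_Ioi (0.5 : ℝ))
  suffices ∃ x1 x2, 0.5 < x1 ∧ x1 < x2 ∧ x2 ≤ x ∧ 0 ≤ f x1 ∧ f x2 ≤ 0 by
    obtain ⟨x1, x2, h1, h2, h0, h3, h4⟩ := this
    exact (h.right_le_of_le_left'' h1 ((h1.trans h2).trans_le h0) h2 h0 (h4.trans h3)).trans h4
  refine ⟨18, 2048, by norm_num1, by norm_num1, x_large, ?_, ?_⟩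
  · have : √(2 * 18 : ℝ) = 6 := (sqrt_eq_iff_mul_self_eq_of_pos (by norm_num1)).mpr (by norm_num1)
    rw [hf _ (by norm_num1), log_nonneg_iff (by positivity), this, one_le_div (by norm_num1)]
    rw [show (6 : ℝ) + 2 = ((8 : ℕ) : ℝ) by norm_num1, rpow_natCast]
    rw [show (18 : ℝ) / 3 = ((6 : ℕ) : ℝ) by norm_num1, rpow_natCast]
    norm_num1
  · have : √(2 * 2048 : ℝ) = 64 :=
      (sqrt_eq_iff_mul_self_eq_of_pos (by norm_num1)).mpr (by norm_num1)
    rw [hf _ (by norm_num1), log_nonpos_iff (hf' _ (by norm_num1)).le, this,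
        div_le_one (by positivity)]
    conv in 2048 => equals 2 ^ 11 => norm_num1
    conv in 2 * 2048 => equals 2 ^ 12 => norm_num1
    rw [show (64 : ℝ) + 2 = ((66 : ℕ) : ℝ) by norm_num1]
    rw [rpow_natCast, ← pow_mul, ← pow_add]
    conv in 4 => equals 2 ^ (2 : ℝ) => rw [rpow_two]; norm_num1
    rw [← rpow_mul, ← rpow_natCast]
    on_goal 1 => apply rpow_le_rpow_of_exponent_le
    all_goals norm_num1

/-- Variant of `Nat.bertrand_main_inequality`. -/
theorem main_inequality3 {n : ℕ} (n_large : 2048 ≤ n) :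
    n * (2 * n) ^ (Nat.sqrt (2 * n) + 2) * 4 ^ (2 * n / 3) ≤ 4 ^ n := by
  rw [← @Nat.cast_le ℝ]
  simp only [Nat.cast_add, Nat.cast_one, Nat.cast_mul, Nat.cast_pow, ← Real.rpow_natCast]
  refine _root_.trans ?_ (real_main_inequality3 (by exact_mod_cast n_large))
  push_cast
  gcongr
  · have n2_pos : 0 < 2 * n := by positivity
    exact_mod_cast n2_pos
  · have h := Real.nat_sqrt_le_real_sqrt (a := 2 * n)
    push_cast at h
    linarith
  · norm_num1
  · exact Nat.cast_div_le.trans (by norm_cast)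

/-- If there are at most two primes in `(n, 2n]`, then the central binomial coefficient
is small. -/
theorem centralBinom_le_of_le_two (n : ℕ) (n_large : 2 < n)
    (h2 : ((Finset.range (2 * n + 1)).filter (fun p => Nat.Prime p ∧ n < p)).card ≤ 2) :
    Nat.centralBinom n ≤ (2 * n) ^ (Nat.sqrt (2 * n) + 2) * 4 ^ (2 * n / 3) := by
  have n_pos : 0 < n := (Nat.zero_le _).trans_lt n_large
  have n2_pos : 1 ≤ 2 * n := mul_pos (zero_lt_two' ℕ) n_pos
  set T : Finset ℕ := (Finset.range (2 * n + 1)).filter (fun p => Nat.Prime p ∧ n < p) with hT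
  let f : ℕ → ℕ := fun x => x ^ n.centralBinom.factorization x
  -- Split the factorization of the central binomial coefficient.
  have key : Nat.centralBinom n =
      (∏ p ∈ Finset.range (2 * n / 3 + 1), f p) * ∏ p ∈ T, f p := by
    rw [← Finset.prod_union]
    · refine (Eq.trans ?_ n.prod_pow_factorization_centralBinom).symm
      apply Finset.prod_subset
      · apply Finset.union_subset
        · exact Finset.range_subset_range.2 (by omega)
        · exact Finset.filter_subset _ _
      intro p hp hp2
      rw [Finset.mem_range, Nat.lt_succ_iff] at hp
      rw [Finset.mem_union, Finset.mem_range, Nat.lt_succ_iff, hT, Finset.mem_filter,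
        Finset.mem_range] at hp2
      push_neg at hp2
      obtain ⟨hp2a, hp2b⟩ := hp2
      by_cases hprime : p.Prime
      · have hpn : p ≤ n := hp2b (by omega) hprime
        have h2n3 : 2 * n < 3 * p := by omega
        simp only [f]
        rw [Nat.factorization_centralBinom_of_two_mul_self_lt_three_mul n_large
          hpn h2n3, Nat.pow_zero]
      · simp only [f]
        rw [Nat.factorization_eq_zero_of_not_prime n.centralBinom hprime, Nat.pow_zero]
    · rw [Finset.disjoint_left]
      intro p hp hpT
      rw [Finset.mem_range, Nat.lt_succ_iff] at hp
      rw [hT, Finset.mem_filter] at hpT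
      omega
  rw [key]
  have hsmall : (∏ p ∈ Finset.range (2 * n / 3 + 1), f p) ≤
      (2 * n) ^ Nat.sqrt (2 * n) * 4 ^ (2 * n / 3) := by
    let S := (Finset.range (2 * n / 3 + 1)).filter Nat.Prime
    have : ∏ x ∈ S, f x = ∏ x ∈ Finset.range (2 * n / 3 + 1), f x := by
      refine Finset.prod_filter_of_ne fun p _ h => ?_
      contrapose! h; dsimp only [f]
      rw [Nat.factorization_eq_zero_of_not_prime n.centralBinom h, _root_.pow_zero]
    rw [← this, ← Finset.prod_filter_mul_prod_filter_not S (· ≤ Nat.sqrt (2 * n))]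
    apply Nat.mul_le_mul
    · refine (Finset.prod_le_prod' fun p _ => (?_ : f p ≤ 2 * n)).trans ?_
      · exact Nat.pow_factorization_choose_le (mul_pos two_pos n_pos)
      have : (Finset.Icc 1 (Nat.sqrt (2 * n))).card = Nat.sqrt (2 * n) := by
        rw [Nat.card_Icc, Nat.add_sub_cancel]
      rw [Finset.prod_const]
      refine pow_right_mono₀ n2_pos ((Finset.card_le_card fun x hx => ?_).trans this.le)
      obtain ⟨h1, h2⟩ := Finset.mem_filter.1 hx
      exact Finset.mem_Icc.mpr ⟨(Finset.mem_filter.1 h1).2.one_lt.le, h2⟩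
    · refine le_trans ?_ (primorial_le_4_pow (2 * n / 3))
      refine (Finset.prod_le_prod' fun p hp => (?_ : f p ≤ p)).trans ?_
      · obtain ⟨h1, h2⟩ := Finset.mem_filter.1 hp
        refine (pow_right_mono₀ (Finset.mem_filter.1 h1).2.one_lt.le ?_).trans (pow_one p).le
        exact Nat.factorization_choose_le_one (Nat.sqrt_lt'.mp <| not_le.1 h2)
      refine Finset.prod_le_prod_of_subset_of_one_le' (Finset.filter_subset _ _) ?_
      exact fun p hp _ => (Finset.mem_filter.1 hp).2.one_lt.le
  have hbig : (∏ p ∈ T, f p) ≤ (2 * n) ^ 2 := by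
    calc (∏ p ∈ T, f p) ≤ (2 * n) ^ T.card := by
          apply Finset.prod_le_pow_card
          intro p _
          exact Nat.pow_factorization_choose_le (mul_pos two_pos n_pos)
      _ ≤ (2 * n) ^ 2 := Nat.pow_le_pow_right (by omega) h2
  calc (∏ p ∈ Finset.range (2 * n / 3 + 1), f p) * ∏ p ∈ T, f p
      ≤ ((2 * n) ^ Nat.sqrt (2 * n) * 4 ^ (2 * n / 3)) * (2 * n) ^ 2 :=
        Nat.mul_le_mul hsmall hbig
    _ = (2 * n) ^ (Nat.sqrt (2 * n) + 2) * 4 ^ (2 * n / 3) := by ring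

/-- For `n ≥ 2048`, there are more than two primes in `(n, 2n]`. -/
theorem two_lt_card_primes (n : ℕ) (n_large : 2048 ≤ n) :
    2 < ((Finset.range (2 * n + 1)).filter (fun p => Nat.Prime p ∧ n < p)).card := by
  by_contra hcon
  push_neg at hcon
  have H1 : n * (2 * n) ^ (Nat.sqrt (2 * n) + 2) * 4 ^ (2 * n / 3) ≤ 4 ^ n :=
    main_inequality3 n_large
  have H2 : 4 ^ n < n * Nat.centralBinom n :=
    Nat.four_pow_lt_mul_centralBinom n (by omega)
  have H3 : Nat.centralBinom n ≤ (2 * n) ^ (Nat.sqrt (2 * n) + 2) * 4 ^ (2 * n / 3) :=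
    centralBinom_le_of_le_two n (by omega) hcon
  rw [mul_assoc] at H1
  exact not_le.2 H2 ((Nat.mul_le_mul_left n H3).trans H1)

/-- Covering lemma: three explicit primes `p < q < r` with `r ≤ x < 2p` witness the bound. -/
theorem cover {p q r x : ℕ} (hp : Nat.Prime p) (hq : Nat.Prime q) (hr : Nat.Prime r)
    (hpq : p < q) (hqr : q < r) (h1 : r ≤ x) (h2 : x < 2 * p) :
    3 ≤ ((Finset.Icc 1 x).filter (fun s => Nat.Prime s ∧ x < 2 * s)).card := by
  have hsub : ({p, q, r} : Finset ℕ) ⊆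
      (Finset.Icc 1 x).filter (fun s => Nat.Prime s ∧ x < 2 * s) := by
    intro s hs
    simp only [Finset.mem_insert, Finset.mem_singleton] at hs
    rcases hs with rfl | rfl | rfl <;>
      refine Finset.mem_filter.2 ⟨Finset.mem_Icc.2 ⟨?_, by omega⟩, ?_, by omega⟩
    · exact hp.one_lt.le
    · exact hp
    · exact hq.one_lt.le
    · exact hq
    · exact hr.one_lt.le
    · exact hr
  have hcard : ({p, q, r} : Finset ℕ).card = 3 := by
    rw [Finset.card_insert_of_notMem (by simp; omega),
      Finset.card_insert_of_notMem (by simp; omega), Finset.card_singleton]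
  calc 3 = ({p, q, r} : Finset ℕ).card := hcard.symm
    _ ≤ _ := Finset.card_le_card hsub

end Ramanujan17

theorem stmt_17 (x : ℕ) (hx : 17 ≤ x) :
    3 ≤ ((Finset.Icc 1 x).filter (fun p => Nat.Prime p ∧ x < 2 * p)).card := by
  by_cases hbig : 4096 ≤ x
  · -- large case: use the modified Bertrand argument with n = x / 2
    set n := x / 2 with hn
    have hn2048 : 2048 ≤ n := by omega
    have h3 := Ramanujan17.two_lt_card_primes n hn2048
    have hsub : (Finset.range (2 * n + 1)).filter (fun p => Nat.Prime p ∧ n < p) ⊆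
        (Finset.Icc 1 x).filter (fun p => Nat.Prime p ∧ x < 2 * p) := by
      intro p hp
      rw [Finset.mem_filter, Finset.mem_range] at hp
      obtain ⟨hpr, hprime, hnp⟩ := hp
      refine Finset.mem_filter.2 ⟨Finset.mem_Icc.2 ⟨hprime.one_lt.le, by omega⟩, hprime, by omega⟩
    exact le_trans h3 (Finset.card_le_card hsub)
  · push_neg at hbig
    by_cases h1 : x < 22
    · exact Ramanujan17.cover (p := 11) (q := 13) (r := 17)
        (by norm_num) (by norm_num) (by norm_num) (by norm_num) (by norm_num)
        (by omega) (by omega)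
    by_cases h2 : x < 26
    · exact Ramanujan17.cover (p := 13) (q := 17) (r := 19)
        (by norm_num) (by norm_num) (by norm_num) (by norm_num) (by norm_num)
        (by omega) (by omega)
    by_cases h3 : x < 34
    · exact Ramanujan17.cover (p := 17) (q := 19) (r := 23)
        (by norm_num) (by norm_num) (by norm_num) (by norm_num) (by norm_num)
        (by omega) (by omega)
    by_cases h4 : x < 46
    · exact Ramanujan17.cover (p := 23) (q := 29) (r := 31)
        (by norm_num) (by norm_num) (by norm_num) (by norm_num) (by norm_num)
        (by omega) (by omega)
    by_cases h5 : x < 74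
    · exact Ramanujan17.cover (p := 37) (q := 41) (r := 43)
        (by norm_num) (by norm_num) (by norm_num) (by norm_num) (by norm_num)
        (by omega) (by omega)
    by_cases h6 : x < 134
    · exact Ramanujan17.cover (p := 67) (q := 71) (r := 73)
        (by norm_num) (by norm_num) (by norm_num) (by norm_num) (by norm_num)
        (by omega) (by omega)
    by_cases h7 : x < 226
    · exact Ramanujan17.cover (p := 113) (q := 127) (r := 131)
        (by norm_num) (by norm_num) (by norm_num) (by norm_num) (by norm_num)
        (by omega) (by omega)
    by_cases h8 : x < 398
    · exact Ramanujan17.cover (p := 199) (q := 211) (r := 223)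
        (by norm_num) (by norm_num) (by norm_num) (by norm_num) (by norm_num)
        (by omega) (by omega)
    by_cases h9 : x < 766
    · exact Ramanujan17.cover (p := 383) (q := 389) (r := 397)
        (by norm_num) (by norm_num) (by norm_num) (by norm_num) (by norm_num)
        (by omega) (by omega)
    by_cases h10 : x < 1502
    · exact Ramanujan17.cover (p := 751) (q := 757) (r := 761)
        (by norm_num) (by norm_num) (by norm_num) (by norm_num) (by norm_num)
        (by omega) (by omega)
    by_cases h11 : x < 2978
    · exact Ramanujan17.cover (p := 1489) (q := 1493) (r := 1499)
        (by norm_num) (by norm_num) (by norm_num) (by norm_num) (by norm_num)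
        (by omega) (by omega)
    · exact Ramanujan17.cover (p := 2963) (q := 2969) (r := 2971)
        (by norm_num) (by norm_num) (by norm_num) (by norm_num) (by norm_num)
        (by omega) (by omega)
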